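/- Let c ≤ 0, λ ≥ 0 be real numbers, j ≥ 1 an integer, and τ > 0. Define h(t) = c·e^{λt}·t^j. Then for all t ∈ [0, τ], h(t) ≥ (c·e^{λτ}·τ^j / τ)·t. -/
import Mathlib

theorem stmt_1 (c lam τ : ℝ) (hc : c ≤ 0) (hlam : 0 ≤ lam) (j : ℕ) (hj : 1 ≤ j)
    (hτ : 0 < τ) :
    ∀ t ∈ Set.Icc (0:ℝ) τ,
      c * Real.exp (lam * t) * t ^ j ≥ (c * Real.exp (lam * τ) * τ ^ j / τ) * t := by
  intro t ht
  obtain ⟨ht0, htτ⟩ := ht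
  have hpow : t ^ j = t ^ (j - 1) * t := by
    rw [← pow_succ]
    congr 1
    omega
  have hpowτ : τ ^ j / τ = τ ^ (j - 1) := by
    rw [div_eq_iff hτ.ne', ← pow_succ]
    congr 1
    omega
  have hexp : Real.exp (lam * t) ≤ Real.exp (lam * τ) :=
    Real.exp_le_exp.mpr (by nlinarith)
  have hkey : Real.exp (lam * t) * t ^ (j - 1) ≤ Real.exp (lam * τ) * τ ^ (j - 1) :=
    mul_le_mul hexp (pow_le_pow_left₀ ht0 htτ _) (pow_nonneg ht0 _) (Real.exp_pos _).le
  have h2 : Real.exp (lam * t) * t ^ j ≤ Real.exp (lam * τ) * τ ^ j / τ * t := by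
    rw [hpow, mul_div_assoc, hpowτ, ← mul_assoc]
    exact mul_le_mul_of_nonneg_right hkey ht0
  have := mul_le_mul_of_nonpos_left h2 hc
  calc (c * Real.exp (lam * τ) * τ ^ j / τ) * t
      = c * (Real.exp (lam * τ) * τ ^ j / τ * t) := by ring
    _ ≤ c * (Real.exp (lam * t) * t ^ j) := this
    _ = c * Real.exp (lam * t) * t ^ j := by ring
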